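/- For all integers m ≥ 1 and n ≥ 1 with m = 1 or n = 1, the jigsaw group Γ_{m,n} is not commensurable with SL(2,ℤ) as subgroups of SL(2,ℝ); that is, Γ_{m,n} ∩ SL(2,ℤ) has infinite index in Γ_{m,n} or in SL(2,ℤ). -/

import Mathlib

noncomputable section

open Matrix

abbrev SL2R := Matrix.SpecialLinearGroup (Fin 2) ℝ

/-- `R x y` is the rotation by `π` about the point `x + iy` of the upper half-plane,
`(1/y)·[[x, −(x²+y²)], [1, −x]] ∈ SL(2,ℝ)`. -/
def R (x y : ℝ) (hy : 0 < y) : SL2R :=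
  ⟨(1 / y) • !![x, -(x ^ 2 + y ^ 2); 1, -x], by
    have hne : y ≠ 0 := hy.ne'
    rw [Matrix.det_smul]
    simp only [Matrix.det_fin_two_of, Fintype.card_fin]
    field_simp
    ring⟩

/-- The generators `ρ₀, ρ₁, …, ρ_{m+n+1}` of the jigsaw group `Γ_{m,n}`:
`jigGen m n k` is `ρ_k` (for `k ≤ m+n+1`). -/
def jigGen (m n : ℕ) (k : ℕ) : SL2R :=
  if k = 0 then R (-(m : ℝ)) 1 one_pos
  else if k ≤ m then R (-(m : ℝ) + (k : ℝ) - 1 / 2) (1 / 2) (by norm_num)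
  else if k ≤ m + n then
    if (k - m) % 3 = 1 then R (2 * ((k - m : ℕ) : ℝ) - 9 / 5) (2 / 5) (by norm_num)
    else if (k - m) % 3 = 2 then R (2 * ((k - m : ℕ) : ℝ) - 1) 2 (by norm_num)
    else R (2 * ((k - m : ℕ) : ℝ) - 1 / 5) (2 / 5) (by norm_num)
  else
    if n % 3 = 1 then R (2 * (n : ℝ) - 1) 2 (by norm_num)
    else if n % 3 = 2 then R (2 * (n : ℝ) + 1) 2 (by norm_num)
    else R (2 * (n : ℝ)) 1 one_pos

/-- The jigsaw group `Γ_{m,n} ≤ SL(2,ℝ)`, generated by `ρ₀, …, ρ_{m+n+1}`. -/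
def JGamma (m n : ℕ) : Subgroup SL2R :=
  Subgroup.closure (jigGen m n '' Set.Iic (m + n + 1))

/-- `SL(2,ℤ)` viewed as a subgroup of `SL(2,ℝ)` via entrywise inclusion of `ℤ` in `ℝ`. -/
def SL2Zinℝ : Subgroup SL2R :=
  (Matrix.SpecialLinearGroup.map (n := Fin 2) (Int.castRingHom ℝ)).range

/-! ### Auxiliary material for the proof -/

/-- The integer matrix `2·(ρ_m ρ_{m+1})`. -/
def jigM : Matrix (Fin 2) (Fin 2) ℤ := !![-6, 2; 7, -3]

lemma coe_jigGen_m (m n : ℕ) (hm : 1 ≤ m) :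
    ((jigGen m n m : SL2R) : Matrix (Fin 2) (Fin 2) ℝ) = !![-1, -1; 2, 1] := by
  have h0 : m ≠ 0 := by omega
  rw [jigGen, if_neg h0, if_pos le_rfl, R]
  ext i j
  fin_cases i <;> fin_cases j <;> norm_num [Matrix.smul_apply]

lemma coe_jigGen_m_succ (m n : ℕ) (hn : 1 ≤ n) :
    ((jigGen m n (m + 1) : SL2R) : Matrix (Fin 2) (Fin 2) ℝ) =
      !![1/2, -1/2; 5/2, -1/2] := by
  have h0 : m + 1 ≠ 0 := by omega
  have h1 : ¬ (m + 1 ≤ m) := by omega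
  have h2 : m + 1 ≤ m + n := by omega
  have h3 : m + 1 - m = 1 := by omega
  rw [jigGen, if_neg h0, if_neg h1, if_pos h2, h3, if_pos (by norm_num : (1:ℕ) % 3 = 1)]
  simp only [R]
  ext i j
  fin_cases i <;> fin_cases j <;> norm_num [Matrix.smul_apply]

lemma mapInt_pow {S : Type*} [CommRing S] (A : Matrix (Fin 2) (Fin 2) ℤ) (k : ℕ) :
    (A ^ k).map (Int.cast : ℤ → S) = (A.map (Int.cast : ℤ → S)) ^ k := by
  have h5 := map_pow ((Int.castRingHom S).mapMatrix) A k
  simp only [RingHom.mapMatrix_apply, Int.coe_castRingHom] at h5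
  convert h5.symm using 2
  rw [h5]

lemma trace_mapInt {S : Type*} [CommRing S] (A : Matrix (Fin 2) (Fin 2) ℤ) :
    (A.map (Int.cast : ℤ → S)).trace = (A.trace : S) := by
  simp [Matrix.trace, Matrix.diag, Matrix.map_apply, Fin.sum_univ_two]

lemma E_pow (k : ℕ) (hk : 0 < k) :
    (!![0, 0; 1, 1] : Matrix (Fin 2) (Fin 2) (ZMod 2)) ^ k = !![0, 0; 1, 1] := by
  induction k with
  | zero => omega
  | succ k ih =>
    rcases Nat.eq_zero_or_pos k with h | h
    · subst h; simp
    · rw [pow_succ, ih h]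
      ext i j
      fin_cases i <;> fin_cases j <;> simp [Matrix.mul_apply, Fin.sum_univ_two]

lemma trace_jigM_pow_odd (k : ℕ) (hk : 0 < k) : ¬ (2 ∣ (jigM ^ k).trace) := by
  intro hdvd
  have h2 : (((jigM ^ k).trace : ℤ) : ZMod 2) = 0 :=
    (ZMod.intCast_zmod_eq_zero_iff_dvd _ 2).mpr (by exact_mod_cast hdvd)
  have hmod : jigM.map (Int.cast : ℤ → ZMod 2) = !![0, 0; 1, 1] := by
    ext i j; fin_cases i <;> fin_cases j <;> simp [jigM] <;> decide
  have h3 : ((jigM ^ k).map (Int.cast : ℤ → ZMod 2)).trace = 1 := by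
    rw [mapInt_pow, hmod, E_pow k hk]
    simp [Matrix.trace, Matrix.diag, Fin.sum_univ_two]
  rw [trace_mapInt, h2] at h3
  exact zero_ne_one h3

lemma index_eq_zero_of_pow_not_mem {G : Type*} [Group G] (H : Subgroup G) (g : G)
    (hg : ∀ d : ℕ, 0 < d → g ^ d ∉ H) : H.index = 0 := by
  by_contra h0
  have hfin : Finite (G ⧸ H) := Nat.finite_of_card_ne_zero h0
  obtain ⟨a, b, hab, heq⟩ := Finite.exists_ne_map_eq_of_infinite
    (fun k : ℕ => (QuotientGroup.mk (g ^ k) : G ⧸ H))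
  have key : ∀ a b : ℕ, a < b →
      (QuotientGroup.mk (g ^ a) : G ⧸ H) = QuotientGroup.mk (g ^ b) → False := by
    intro a b hlt he
    have h := QuotientGroup.eq.mp he
    have hrw : (g ^ a)⁻¹ * g ^ b = g ^ (b - a) := by
      rw [← Nat.add_sub_cancel' hlt.le, pow_add]
      simp
    rw [hrw] at h
    exact hg (b - a) (by omega) (by simpa using h)
  rcases hab.lt_or_gt with hlt | hlt
  · exact key a b hlt heq
  · exact key b a hlt heq.symm

/-- For `m, n ≥ 1` with `m = 1` or `n = 1`, the jigsaw group `Γ_{m,n}` is not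
commensurable with `SL(2,ℤ)` as subgroups of `SL(2,ℝ)`. -/
theorem jigsaw_not_commensurable_SL2Z (m n : ℕ) (hm : 1 ≤ m) (hn : 1 ≤ n)
    (h : m = 1 ∨ n = 1) :
    ¬ Subgroup.Commensurable (JGamma m n) SL2Zinℝ := by
  intro hcom
  have hrel : SL2Zinℝ.relIndex (JGamma m n) ≠ 0 := hcom.2
  set g : SL2R := jigGen m n m * jigGen m n (m + 1) with hgdef
  -- the matrix of g
  have hgcoe : ((g : SL2R) : Matrix (Fin 2) (Fin 2) ℝ) =
      (2 : ℝ)⁻¹ • (jigM.map (Int.cast : ℤ → ℝ)) := by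
    rw [hgdef, Matrix.SpecialLinearGroup.coe_mul, coe_jigGen_m m n hm,
      coe_jigGen_m_succ m n hn]
    ext i j
    fin_cases i <;> fin_cases j <;>
      norm_num [Matrix.mul_apply, Fin.sum_univ_two, Matrix.smul_apply, jigM,
        Matrix.map_apply]
  -- g belongs to the jigsaw group
  have hgmem : g ∈ JGamma m n := by
    apply Subgroup.mul_mem
    · exact Subgroup.subset_closure ⟨m, by simp [Set.mem_Iic]; omega, rfl⟩
    · exact Subgroup.subset_closure ⟨m + 1, by simp [Set.mem_Iic], rfl⟩
  -- no positive power of g is integral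
  have hpow : ∀ d : ℕ, 0 < d → g ^ d ∉ SL2Zinℝ := by
    intro d hd hmem
    obtain ⟨A, hA⟩ := hmem
    -- traces
    have hAcoe : ((A : Matrix (Fin 2) (Fin 2) ℤ).map (Int.cast : ℤ → ℝ)) =
        ((g ^ d : SL2R) : Matrix (Fin 2) (Fin 2) ℝ) := by
      rw [← hA]
      rfl
    have hgd : ((g ^ d : SL2R) : Matrix (Fin 2) (Fin 2) ℝ) =
        ((2 : ℝ)⁻¹) ^ d • ((jigM ^ d).map (Int.cast : ℤ → ℝ)) := by
      rw [Matrix.SpecialLinearGroup.coe_pow, hgcoe, smul_pow, mapInt_pow]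
    have htr : ((A : Matrix (Fin 2) (Fin 2) ℤ).trace : ℝ) =
        ((2 : ℝ)⁻¹) ^ d * ((jigM ^ d).trace : ℝ) := by
      have := congrArg Matrix.trace (hAcoe.trans hgd)
      rwa [trace_mapInt, Matrix.trace_smul, trace_mapInt, smul_eq_mul] at this
    have hZ : ((jigM ^ d).trace : ℝ) =
        (2 : ℝ) ^ d * ((A : Matrix (Fin 2) (Fin 2) ℤ).trace : ℝ) := by
      rw [htr]
      field_simp
      rw [mul_assoc, ← mul_pow]; norm_num
    have hZZ : (jigM ^ d).trace = 2 ^ d * (A : Matrix (Fin 2) (Fin 2) ℤ).trace := by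
      exact_mod_cast hZ
    exact trace_jigM_pow_odd d hd ⟨2 ^ (d - 1) * (A : Matrix (Fin 2) (Fin 2) ℤ).trace,
      by rw [hZZ, ← mul_assoc, ← pow_succ']; congr 2; omega⟩
  -- conclude infinite relative index
  apply hrel
  rw [Subgroup.relIndex]
  apply index_eq_zero_of_pow_not_mem _ (⟨g, hgmem⟩ : JGamma m n)
  intro d hd hmemd
  rw [Subgroup.mem_subgroupOf] at hmemd
  exact hpow d hd (by simpa using hmemd)
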